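/- Suppose K satisfies conditions (1) (universal axiomatizability) and (3) (free amalgamation) of hypotheses (H). Let U be a member of K, let (B_i)_{i<ω} be a countable family of members of K, and for each i let E_i be a substructure of U and f_i : E_i → B_i an embedding. Then there exist a member U' of K containing U as a substructure and embeddings g_i : B_i → U' such that for every i < ω the composite g_i ∘ f_i is the inclusion of E_i into U'. -/

import Mathlib

open FirstOrder FirstOrder.Language CategoryTheory Cardinal Set

namespace FraisseFreeAmalg

variable (L : FirstOrder.Language.{0, 0})

/-- The class is closed under isomorphism. -/
def IsoClosed (K : Set (Bundled.{0} L.Structure)) : Prop :=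
  ∀ A ∈ K, ∀ B : Bundled.{0} L.Structure, Nonempty (A ≃[L] B) → B ∈ K

/-- All members of the class are finite or countably infinite. -/
def SmallMembers (K : Set (Bundled.{0} L.Structure)) : Prop :=
  ∀ A ∈ K, Countable A

/-- Condition (1) of (H): universal axiomatizability. -/
def UnivAx (K : Set (Bundled.{0} L.Structure)) : Prop :=
  ∀ A : Bundled.{0} L.Structure, Countable A → A ∉ K →
    ∃ (n : ℕ) (φ : L.Formula (Fin n)) (a : Fin n → A),
      φ.IsQF ∧ φ.Realize a ∧ ∀ B ∈ K, ∀ b : Fin n → B, ¬ φ.Realize b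

/-- Condition (2) of (H): quantifier elimination. -/
def QElim (K : Set (Bundled.{0} L.Structure)) : Prop :=
  ∀ (m n : ℕ) (φ : L.Formula (Fin m ⊕ Fin n)), φ.IsQF →
    ∀ A ∈ K, ∀ (a : Fin m → A) (b : Fin n → A), φ.Realize (Sum.elim a b) →
      ∃ ψ : L.Formula (Fin m), ψ.IsQF ∧ ψ.Realize a ∧
        ∀ A' ∈ K, ∀ a' : Fin m → A', ψ.Realize a' →
          ∃ B' ∈ K, ∃ (i : A' ↪[L] B') (b' : Fin n → B'),
            φ.Realize (Sum.elim (fun k => i (a' k)) b')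

/-- `D` together with `iA, iB` is a free amalgam of `A` and `B` over `C` in the class `K`. -/
def IsFreeAmalgam (K : Set (Bundled.{0} L.Structure))
    (C A B : Bundled.{0} L.Structure) (cA : C ↪[L] A) (cB : C ↪[L] B)
    (D : Bundled.{0} L.Structure) (iA : A ↪[L] D) (iB : B ↪[L] D) : Prop :=
  (∀ c : C, iA (cA c) = iB (cB c)) ∧
  (Set.range iA ∩ Set.range iB = Set.range fun c : C => iA (cA c)) ∧
  Substructure.closure L (Set.range iA ∪ Set.range iB) = ⊤ ∧
  ∀ D' ∈ K, ∀ (φA : A →[L] D') (φB : B →[L] D'),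
    (∀ c : C, φA (cA c) = φB (cB c)) →
    ∃! φ : D →[L] D',
      (∀ a : A, φ (iA a) = φA a) ∧ (∀ b : B, φ (iB b) = φB b)

/-- Condition (3) of (H): free amalgamation (together with agreement on the
substructures generated by the constants). -/
def FreeAmalg (K : Set (Bundled.{0} L.Structure)) : Prop :=
  (∀ A ∈ K, ∀ B ∈ K,
      Nonempty ((⊥ : L.Substructure A) ≃[L] (⊥ : L.Substructure B))) ∧
  ∀ (C A B : Bundled.{0} L.Structure), C ∈ K → A ∈ K → B ∈ K →
    ∀ (cA : C ↪[L] A) (cB : C ↪[L] B),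
      ∃ D ∈ K, ∃ (iA : A ↪[L] D) (iB : B ↪[L] D),
        IsFreeAmalgam L K C A B cA cB D iA iB

/-- Condition (4) of (H): generic element. -/
def GenericElem (K : Set (Bundled.{0} L.Structure)) : Prop :=
  ∃ X ∈ K, ∃ x : X, Substructure.closure L ({x} : Set X) = ⊤ ∧
    ∀ A ∈ K, ∀ a : A, ∃ φ : X →[L] A, φ x = a

/-- Condition (5) of (H): algebraically independent 3-amalgamation. -/
def ThreeAmalg (K : Set (Bundled.{0} L.Structure)) : Prop :=
  ∀ (E A B : Bundled.{0} L.Structure) (Bb Dd : Fin 2 → Bundled.{0} L.Structure),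
    E ∈ K → A ∈ K → B ∈ K → (∀ i, Bb i ∈ K) → (∀ i, Dd i ∈ K) →
    ∀ (eA : E ↪[L] A) (eB : ∀ i, E ↪[L] Bb i)
      (aD : ∀ i, A ↪[L] Dd i) (bD : ∀ i, Bb i ↪[L] Dd i)
      (bB : ∀ i, Bb i ↪[L] B),
      (∀ i, ∀ e : E, aD i (eA e) = bD i (eB i e)) →
      (∀ e : E, bB 0 (eB 0 e) = bB 1 (eB 1 e)) →
      (∀ i, Set.range (aD i) ∩ Set.range (bD i) =
        Set.range fun e : E => aD i (eA e)) →
      (Set.range (bB 0) ∩ Set.range (bB 1) =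
        Set.range fun e : E => bB 0 (eB 0 e)) →
      ∃ D ∈ K, ∃ (dD : ∀ i, Dd i ↪[L] D) (jB : B ↪[L] D),
        (∀ i, ∀ b : Bb i, dD i (bD i b) = jB (bB i b)) ∧
        (∀ a : A, dD 0 (aD 0 a) = dD 1 (aD 1 a)) ∧
        (∀ i, Set.range (dD i) ∩ Set.range jB =
          Set.range fun b : Bb i => dD i (bD i b)) ∧
        (Set.range (dD 0) ∩ Set.range (dD 1) =
          Set.range fun a : A => dD 0 (aD 0 a))

/-- The hypotheses (H) on the class `K`. -/
structure HypH (K : Set (Bundled.{0} L.Structure)) : Prop where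
  small : SmallMembers L K
  isoClosed : IsoClosed L K
  univAx : UnivAx L K
  qElim : QElim L K
  freeAmalg : FreeAmalg L K
  generic : GenericElem L K
  threeAmalg : ThreeAmalg L K

/-- `M` is `K`-ℵ₁-saturated. -/
def KSat (K : Set (Bundled.{0} L.Structure)) (M : Type) [L.Structure M] : Prop :=
  (∀ S : L.Substructure M, Cardinal.mk S < Cardinal.aleph 1 → (Bundled.of (↥S) : Bundled L.Structure) ∈ K) ∧
  ∀ U ∈ K, ∀ B ∈ K, ∀ (f₀ : U ↪[L] M) (f₁ : U ↪[L] B),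
    ∃ g : B ↪[L] M, ∀ u : U, g (f₁ u) = f₀ u

/-- Γ-independence of countable substructures of `M`. -/
def GammaIndep (M : Type) [L.Structure M] (E A B : L.Substructure M) : Prop :=
  ∀ D' : L.Substructure M, Countable D' →
    ∀ (φA : A →[L] D') (φB : B →[L] D'),
      (∀ (x : M) (hA : x ∈ A) (hB : x ∈ B), x ∈ E → φA ⟨x, hA⟩ = φB ⟨x, hB⟩) →
      ∃! φ : ↥(A ⊔ B) →[L] D',
        (∀ (x : M) (h : x ∈ A), φ ⟨x, (le_sup_left : A ≤ A ⊔ B) h⟩ = φA ⟨x, h⟩) ∧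
        (∀ (x : M) (h : x ∈ B), φ ⟨x, (le_sup_right : B ≤ A ⊔ B) h⟩ = φB ⟨x, h⟩)

/-- M-independence: forcing base monotonicity on algebraic independence. -/
def MIndep (M : Type) [L.Structure M] (E A B : L.Substructure M) : Prop :=
  ∀ C : L.Substructure M, E ≤ C → C ≤ B → (A ⊔ C) ⊓ B = C



section Aux

variable {L}

lemma qf_realize_embedding' {M N : Type} [L.Structure M] [L.Structure N]
    (g : M ↪[L] N) {n : ℕ} {φ : L.Formula (Fin n)} (h : φ.IsQF) (a : Fin n → M) :
    φ.Realize (g ∘ a) ↔ φ.Realize a := by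
  have := h.realize_embedding g (v := a) (xs := default)
  rwa [Subsingleton.elim (g ∘ (default : Fin 0 → M)) default] at this

lemma countable_mem_K {K : Set (Bundled.{0} L.Structure)}
    (h1 : UnivAx L K) {M : Type} [L.Structure M] [Countable M]
    {A : Bundled.{0} L.Structure} (hA : A ∈ K) (g : M ↪[L] A) :
    (Bundled.of M : Bundled L.Structure) ∈ K := by
  by_contra hM
  obtain ⟨n, φ, a, hqf, hra, hnone⟩ := h1 (Bundled.of M) ‹Countable M› hM
  exact hnone A hA (g ∘ a) ((qf_realize_embedding' g hqf a).mpr hra)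

lemma limit_mem_K {K : Set (Bundled.{0} L.Structure)}
    (hSmall : SmallMembers L K) (h1 : UnivAx L K)
    (G : ℕ → Bundled.{0} L.Structure) (hG : ∀ n, G n ∈ K)
    (fc : ∀ i j : ℕ, i ≤ j → G i ↪[L] G j)
    [DirectedSystem (fun n => (G n : Type)) fun i j h => fc i j h] :
    (Bundled.of (Language.DirectLimit (fun n => (G n : Type)) fc) : Bundled L.Structure) ∈ K := by
  haveI : ∀ n, Countable (G n) := fun n => hSmall _ (hG n)
  haveI hc : Countable (Language.DirectLimit (fun n => (G n : Type)) fc) :=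
    @Quotient.countable (Structure.Sigma fc) _ _
  by_contra hM
  obtain ⟨n, φ, a, hqf, hra, hnone⟩ := h1 _ hc hM
  choose idx x hx using fun k => DirectLimit.exists_of (a k)
  set m := Finset.univ.sup idx with hm
  have hle : ∀ k, idx k ≤ m := fun k => Finset.le_sup (Finset.mem_univ k)
  set b : Fin n → G m := fun k => fc (idx k) m (hle k) (x k) with hb
  have hab : a = (DirectLimit.of L ℕ (fun n => (G n : Type)) fc m) ∘ b := by
    funext k
    rw [Function.comp_apply, hb, DirectLimit.of_f, hx]
  rw [hab] at hra
  exact hnone (G m) (hG m) b ((qf_realize_embedding' _ hqf b).mp hra)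

end Aux

/-- Under conditions (1) and (3) of (H), countably many partial
embeddings into members of `K` can be simultaneously inverted in an extension. -/
theorem statement_3 (L : FirstOrder.Language.{0, 0})
    (K : Set (Bundled.{0} L.Structure))
    (hSmall : SmallMembers L K) (hIso : IsoClosed L K)
    (h1 : UnivAx L K) (h3 : FreeAmalg L K)
    (U : Bundled.{0} L.Structure) (hU : U ∈ K)
    (B : ℕ → Bundled.{0} L.Structure) (hB : ∀ i, B i ∈ K)
    (E : ℕ → L.Substructure U) (f : ∀ i : ℕ, E i ↪[L] B i) :
    ∃ U' ∈ K, ∃ (j : U ↪[L] U') (g : ∀ i : ℕ, B i ↪[L] U'),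
      ∀ (i : ℕ) (e : E i), g i (f i e) = j (e : U) := by
  haveI hUc : Countable U := hSmall U hU
  have hEK : ∀ n, (Bundled.of ↥(E n) : Bundled L.Structure) ∈ K := fun n =>
    countable_mem_K h1 hU (E n).subtype
  have step : ∀ (n : ℕ) (A : Bundled.{0} L.Structure), A ∈ K → ∀ j : ↥(E n) ↪[L] A,
      ∃ D : Bundled.{0} L.Structure, D ∈ K ∧ ∃ (iA : A ↪[L] D) (iB : B n ↪[L] D),
        ∀ x : E n, iA (j x) = iB (f n x) := by
    intro n A hA j
    obtain ⟨D, hD, iA, iB, hfa⟩ := h3.2 (Bundled.of ↥(E n)) A (B n) (hEK n) hA (hB n) j (f n)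
    exact ⟨D, hD, iA, iB, hfa.1⟩
  let T : ℕ → Σ' (A : Bundled.{0} L.Structure) (_ : A ∈ K), U ↪[L] A :=
    fun n => Nat.rec ⟨U, hU, Embedding.refl L U⟩
      (fun n p =>
        ⟨(step n p.1 p.2.1 (p.2.2.comp (E n).subtype)).choose,
         (step n p.1 p.2.1 (p.2.2.comp (E n).subtype)).choose_spec.1,
         ((step n p.1 p.2.1 (p.2.2.comp (E n).subtype)).choose_spec.2.choose).comp p.2.2⟩) n
  let G : ℕ → Bundled.{0} L.Structure := fun n => (T n).1
  let jn : ∀ n, U ↪[L] G n := fun n => (T n).2.2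
  let tr : ∀ n, (G n : Type) ↪[L] G (n + 1) := fun n =>
    (step n (T n).1 (T n).2.1 ((T n).2.2.comp (E n).subtype)).choose_spec.2.choose
  let ib : ∀ n, (B n : Type) ↪[L] G (n + 1) := fun n =>
    (step n (T n).1 (T n).2.1
      ((T n).2.2.comp (E n).subtype)).choose_spec.2.choose_spec.choose
  have hcomm : ∀ n (x : E n), tr n (jn n (x : U)) = ib n (f n x) := fun n =>
    (step n (T n).1 (T n).2.1
      ((T n).2.2.comp (E n).subtype)).choose_spec.2.choose_spec.choose_spec
  let fc := DirectedSystem.natLERec tr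
  haveI : DirectedSystem (fun n => (G n : Type)) fun i j h => fc i j h :=
    DirectedSystem.natLERec.directedSystem tr
  let U' : Bundled.{0} L.Structure := Bundled.of (Language.DirectLimit (fun n => (G n : Type)) fc)
  have hU' : U' ∈ K := limit_mem_K hSmall h1 G (fun n => (T n).2.1) fc
  let of' : ∀ n, (G n : Type) ↪[L] U' :=
    fun n => DirectLimit.of L ℕ (fun n => (G n : Type)) fc n
  have hof : ∀ n (x : G n), of' (n + 1) (tr n x) = of' n x := by
    intro n x
    have h1' : fc n (n + 1) (Nat.le_succ n) x = tr n x := by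
      have := congrFun (DirectedSystem.coe_natLERec tr n (n + 1) (Nat.le_succ n)) x
      rw [this]
      exact Nat.leRecOn_succ' (C := fun k => (G k : Type)) ..
    rw [← h1']
    exact DirectLimit.of_f
  have hjn : ∀ n (u : U), of' n (jn n u) = of' 0 u := by
    intro n
    induction n with
    | zero => intro u; rfl
    | succ n ih =>
      intro u
      have h2' : jn (n + 1) u = tr n (jn n u) := rfl
      rw [h2', hof, ih]
  refine ⟨U', hU', of' 0, fun i => (of' (i + 1)).comp (ib i), ?_⟩
  intro i e
  show of' (i + 1) (ib i (f i e)) = of' 0 (e : U)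
  rw [← hcomm i e, hof, hjn]

end FraisseFreeAmalg
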